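/- Let (f_k)_{k∈ℕ} be a frame sequence in H with synthesis operator T. Then T has closed range, and if T† denotes the Moore-Penrose pseudoinverse of T, then ‖T†‖⁻¹‖Pf‖ ≤ ‖T*f‖ ≤ ‖T‖‖Pf‖ for every f ∈ H, and ‖T†‖⁻¹‖Qc‖ ≤ ‖Tc‖ ≤ ‖T‖‖Qc‖ for every c ∈ ℓ²(ℕ). -/

import Mathlib

/- Setting: `H` is a complex Hilbert space, `ℓ2` is the Hilbert space of square-summable
complex sequences with standard orthonormal basis `lp.single 2 k 1`. -/

noncomputable section

abbrev ℓ2 : Type := lp (fun _ : ℕ => ℂ) 2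

variable {H : Type} [NormedAddCommGroup H] [InnerProductSpace ℂ H] [CompleteSpace H]

/-- The closed linear span `V` of the set of values of the sequence `f`. -/
def spanClosure (f : ℕ → H) : Submodule ℂ H :=
  (Submodule.span ℂ (Set.range f)).topologicalClosure

instance (f : ℕ → H) : CompleteSpace (spanClosure f) :=
  Submodule.topologicalClosure.completeSpace _

/-- `f` is a frame sequence with frame bounds `A`, `B`:  the frame inequality
`A‖g‖² ≤ ∑ₖ |⟨g, fₖ⟩|² ≤ B‖g‖²` holds for every `g` in the closed linear span `V` of the `fₖ`.
(In Mathlib's convention, the paper's `⟨g, fₖ⟩`, linear in the first argument, is `⟪fₖ, g⟫`.) -/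
def IsFrameSeqWith (f : ℕ → H) (A B : ℝ) : Prop :=
  0 < A ∧ 0 < B ∧
    ∀ g ∈ spanClosure f,
      Summable (fun k => ‖(inner ℂ (f k) g : ℂ)‖ ^ 2) ∧
      A * ‖g‖ ^ 2 ≤ ∑' k, ‖(inner ℂ (f k) g : ℂ)‖ ^ 2 ∧
      (∑' k, ‖(inner ℂ (f k) g : ℂ)‖ ^ 2) ≤ B * ‖g‖ ^ 2

/-- The orthogonal projection `P` of `H` onto `V`, as an operator `H → H`. -/
def projV (f : ℕ → H) : H →L[ℂ] H :=
  (spanClosure f).subtypeL ∘L Submodule.orthogonalProjectionOnto (spanClosure f)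

/-- The orthogonal projection `Q` of `ℓ2` onto `(ker T)ᗮ`, as an operator `ℓ2 → ℓ2`. -/
def projQ (T : ℓ2 →L[ℂ] H) : ℓ2 →L[ℂ] ℓ2 :=
  (LinearMap.ker (T : ℓ2 →ₗ[ℂ] H))ᗮ.subtypeL ∘L
    Submodule.orthogonalProjectionOnto (LinearMap.ker (T : ℓ2 →ₗ[ℂ] H))ᗮ

/-- `Ad` is the Moore–Penrose pseudoinverse of the bounded operator `A`:
`A A† A = A`, `A† A A† = A†`, `(A A†)* = A A†` and `(A† A)* = A† A`. -/
def IsMoorePenrose {E F : Type} [NormedAddCommGroup E] [InnerProductSpace ℂ E] [CompleteSpace E]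
    [NormedAddCommGroup F] [InnerProductSpace ℂ F] [CompleteSpace F]
    (A : E →L[ℂ] F) (Ad : F →L[ℂ] E) : Prop :=
  A ∘L Ad ∘L A = A ∧ Ad ∘L A ∘L Ad = Ad ∧
  ContinuousLinearMap.adjoint (A ∘L Ad) = A ∘L Ad ∧
  ContinuousLinearMap.adjoint (Ad ∘L A) = Ad ∘L A

section proofwork
open ContinuousLinearMap

variable {H : Type} [NormedAddCommGroup H] [InnerProductSpace ℂ H] [CompleteSpace H]

private lemma l2_norm_sq (x : ℓ2) : ‖x‖ ^ 2 = ∑' k, ‖x k‖ ^ 2 := by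
  have h := lp.norm_rpow_eq_tsum (p := 2) (by norm_num) x
  norm_num at h
  exact h

private lemma adj_coord (f : ℕ → H) (T : ℓ2 →L[ℂ] H)
    (hT : ∀ c : ℓ2, HasSum (fun k => c k • f k) (T c)) (g : H) (k : ℕ) :
    (ContinuousLinearMap.adjoint T g) k = (inner ℂ (f k) g : ℂ) := by
  have h1 : T (lp.single 2 k (1:ℂ)) = f k := by
    refine (hT (lp.single 2 k 1)).unique ?_
    convert hasSum_ite_eq k (f k) using 2 with j
    by_cases h : j = k <;> simp [lp.single_apply, h]
  have h2 : (inner ℂ (lp.single 2 k (1:ℂ)) (ContinuousLinearMap.adjoint T g) : ℂ)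
      = (ContinuousLinearMap.adjoint T g) k := by
    rw [lp.inner_single_left]
    simp
  rw [← h2, adjoint_inner_right, h1]

end proofwork

set_option maxHeartbeats 1000000 in
/-- for a frame sequence, the synthesis operator `T` has closed range and,
`T†` being the Moore-Penrose pseudoinverse of `T`,
`‖T†‖⁻¹‖Pg‖ ≤ ‖T*g‖ ≤ ‖T‖‖Pg‖` for all `g ∈ H` and
`‖T†‖⁻¹‖Qc‖ ≤ ‖Tc‖ ≤ ‖T‖‖Qc‖` for all `c ∈ ℓ²`. -/
theorem stmt7 (f : ℕ → H) (A B : ℝ) (hF : IsFrameSeqWith f A B)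
    (T : ℓ2 →L[ℂ] H) (hT : ∀ c : ℓ2, HasSum (fun k => c k • f k) (T c)) :
    IsClosed (Set.range T) ∧
      ∀ Tdag : H →L[ℂ] ℓ2, IsMoorePenrose T Tdag →
        (∀ g : H,
            ‖Tdag‖⁻¹ * ‖projV f g‖ ≤ ‖ContinuousLinearMap.adjoint T g‖ ∧
            ‖ContinuousLinearMap.adjoint T g‖ ≤ ‖T‖ * ‖projV f g‖) ∧
        (∀ c : ℓ2, ‖Tdag‖⁻¹ * ‖projQ T c‖ ≤ ‖T c‖ ∧ ‖T c‖ ≤ ‖T‖ * ‖projQ T c‖) := by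
  obtain ⟨hA, hB, hfr⟩ := hF
  have hfV : ∀ k, f k ∈ spanClosure f := fun k =>
    Submodule.le_topologicalClosure _ (Submodule.subset_span (Set.mem_range_self k))
  have hVclosed : IsClosed ((spanClosure f : Submodule ℂ H) : Set H) :=
    Submodule.isClosed_topologicalClosure _
  have hTV : ∀ c : ℓ2, T c ∈ spanClosure f := by
    intro c
    refine hVclosed.mem_of_tendsto (hT c) (Filter.Eventually.of_forall fun s => ?_)
    exact Submodule.sum_mem _ fun k _ => Submodule.smul_mem _ _ (hfV k)
  have hTsnorm : ∀ g : H,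
      ‖ContinuousLinearMap.adjoint T g‖ ^ 2 = ∑' k, ‖(inner ℂ (f k) g : ℂ)‖ ^ 2 := by
    intro g
    rw [l2_norm_sq]
    exact tsum_congr fun k => by rw [adj_coord f T hT]
  -- the operator S = P ∘ T T* on V
  set V : Submodule ℂ H := spanClosure f with hVdef
  let S : V →L[ℂ] V :=
    Submodule.orthogonalProjectionOnto V ∘L ((T ∘L ContinuousLinearMap.adjoint T) ∘L V.subtypeL)
  have hS : ∀ v : V, (S v : H) = T (ContinuousLinearMap.adjoint T ↑v) := by
    intro v
    show ((Submodule.orthogonalProjectionOnto V (T (ContinuousLinearMap.adjoint T ↑v)) : V) : H) = _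
    exact Submodule.starProjection_eq_self_iff.mpr (hTV _)
  have hSlow : ∀ v : V, A * ‖v‖ ≤ ‖S v‖ := by
    intro v
    rcases eq_or_ne v 0 with rfl | hv
    · simp
    have hv' : (0:ℝ) < ‖v‖ := norm_pos_iff.mpr hv
    have h1 : A * ‖(v : H)‖ ^ 2 ≤ ∑' k, ‖(inner ℂ (f k) (v : H) : ℂ)‖ ^ 2 := (hfr (v : H) v.2).2.1
    have h2 : (∑' k, ‖(inner ℂ (f k) (v : H) : ℂ)‖ ^ 2)
        = RCLike.re (inner ℂ ((v : H)) (T (ContinuousLinearMap.adjoint T ↑v)) : ℂ) := by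
      rw [← hTsnorm, ← ContinuousLinearMap.adjoint_inner_left, inner_self_eq_norm_sq]
    have h3 : RCLike.re (inner ℂ ((v : H)) (T (ContinuousLinearMap.adjoint T ↑v)) : ℂ)
        ≤ ‖v‖ * ‖S v‖ := by
      rw [← hS v]
      have := re_inner_le_norm (𝕜 := ℂ) (v : H) ((S v : H))
      simpa using this
    have h1' : A * ‖v‖ ^ 2 ≤ ∑' k, ‖(inner ℂ (f k) (v : H) : ℂ)‖ ^ 2 := h1
    nlinarith [h1', h2, h3, hv']
  have hSsym : ∀ v w : V, (inner ℂ (S v) w : ℂ) = inner ℂ v (S w) := by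
    intro v w
    rw [Submodule.coe_inner, Submodule.coe_inner, hS v, hS w]
    rw [← ContinuousLinearMap.adjoint_inner_right T (ContinuousLinearMap.adjoint T ↑v) (w : H)]
    rw [← ContinuousLinearMap.adjoint_inner_left T (ContinuousLinearMap.adjoint T ↑w) (v : H)]
  have hSinj : ∀ v : V, S v = 0 → v = 0 := by
    intro v h
    have := hSlow v
    rw [h, norm_zero] at this
    have : ‖v‖ ≤ 0 := nonpos_of_mul_nonpos_right (by nlinarith) hA
    simpa [norm_le_zero_iff] using this
  have hSanti : AntilipschitzWith (⟨A, hA.le⟩ : NNReal)⁻¹ S := by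
    refine ContinuousLinearMap.antilipschitz_of_bound S fun x => ?_
    have h := hSlow x
    have hco : (((⟨A, hA.le⟩ : NNReal)⁻¹ : NNReal) : ℝ) = A⁻¹ := by
      exact NNReal.coe_inv _
    rw [hco]
    calc ‖x‖ = A⁻¹ * (A * ‖x‖) := by field_simp
      _ ≤ A⁻¹ * ‖S x‖ := mul_le_mul_of_nonneg_left h (by positivity)
  have hSrange_closed : IsClosed (Set.range S) :=
    hSanti.isClosed_range S.uniformContinuous
  have hRS : LinearMap.range (S : V →ₗ[ℂ] V) = ⊤ := by
    have hcl : IsClosed ((LinearMap.range (S : V →ₗ[ℂ] V) : Submodule ℂ V) : Set V) := by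
      rw [LinearMap.coe_range]; exact hSrange_closed
    haveI : CompleteSpace (LinearMap.range (S : V →ₗ[ℂ] V) : Submodule ℂ V) := hcl.completeSpace_coe
    rw [← Submodule.orthogonal_eq_bot_iff]
    rw [Submodule.eq_bot_iff]
    intro x hx
    have hx' : ∀ u ∈ LinearMap.range (S : V →ₗ[ℂ] V), (inner ℂ u x : ℂ) = 0 :=
      (Submodule.mem_orthogonal _ x).mp hx
    have hSx : S x = 0 := by
      refine ext_inner_left ℂ fun w => ?_
      rw [inner_zero_right, ← hSsym w x]
      exact hx' (S w) ⟨w, rfl⟩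
    exact hSinj x hSx
  have hsurj : ∀ g ∈ V, g ∈ LinearMap.range (T : ℓ2 →ₗ[ℂ] H) := by
    intro g hg
    obtain ⟨v, hv⟩ := LinearMap.range_eq_top.mp hRS ⟨g, hg⟩
    refine ⟨ContinuousLinearMap.adjoint T ↑v, ?_⟩
    have := hS v
    rw [show S v = ⟨g, hg⟩ from hv] at this
    exact this.symm
  have hrangeset : Set.range T = (V : Set H) := by
    apply Set.Subset.antisymm
    · rintro _ ⟨c, rfl⟩
      exact hTV c
    · intro g hg
      exact hsurj g hg
  constructor
  · rw [hrangeset]; exact hVclosed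
  rintro Tdag ⟨h1, h2, h3, h4⟩
  have h1' : ∀ c : ℓ2, T (Tdag (T c)) = T c := fun c => ContinuousLinearMap.ext_iff.mp h1 c
  have hadjnorm : ‖ContinuousLinearMap.adjoint T‖ = ‖T‖ :=
    LinearIsometryEquiv.norm_map ContinuousLinearMap.adjoint T
  have hQ : ∀ c : ℓ2, projQ T c = Tdag (T c) := by
    intro c
    have hm : Tdag (T c) ∈ (LinearMap.ker (T : ℓ2 →ₗ[ℂ] H))ᗮ := by
      rw [Submodule.mem_orthogonal]
      intro u hu
      have hu0 : (Tdag ∘L T) u = 0 := by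
        have : T u = 0 := hu
        simp [ContinuousLinearMap.comp_apply, this]
      have e0 : Tdag (T c) = ContinuousLinearMap.adjoint (Tdag ∘L T) c := by
        rw [h4]; rfl
      rw [e0, ContinuousLinearMap.adjoint_inner_right (Tdag ∘L T) u c, hu0, inner_zero_left]
    have ho : c - Tdag (T c) ∈ ((LinearMap.ker (T : ℓ2 →ₗ[ℂ] H))ᗮ)ᗮ := by
      apply Submodule.le_orthogonal_orthogonal
      have : T (c - Tdag (T c)) = 0 := by rw [map_sub, h1' c, sub_self]
      exact this
    exact Submodule.eq_starProjection_of_mem_orthogonal hm ho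
  have hP : ∀ g : H, projV f g = T (Tdag g) := by
    intro g
    have hm : T (Tdag g) ∈ V := hTV _
    have ho : g - T (Tdag g) ∈ Vᗮ := by
      rw [Submodule.mem_orthogonal]
      intro u hu
      obtain ⟨c, rfl⟩ := hsurj u hu
      have key : (inner ℂ (T c) (T (Tdag g)) : ℂ) = inner ℂ (T c) g := by
        have e0 : T (Tdag g) = ContinuousLinearMap.adjoint (T ∘L Tdag) g := by
          rw [h3]; rfl
        rw [e0, ContinuousLinearMap.adjoint_inner_right (T ∘L Tdag) (T c) g]
        have e1 : (T ∘L Tdag) (T c) = T c := by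
          show T (Tdag (T c)) = T c
          exact h1' c
        rw [e1]
      rw [inner_sub_right]; exact sub_eq_zero.mpr key.symm
    exact Submodule.eq_starProjection_of_mem_orthogonal hm ho
  constructor
  · intro g
    have e1 : (T ∘L Tdag) ∘L T = T := by rw [ContinuousLinearMap.comp_assoc]; exact h1
    have e2 : ContinuousLinearMap.adjoint T ∘L (T ∘L Tdag) = ContinuousLinearMap.adjoint T := by
      have := congrArg ContinuousLinearMap.adjoint e1
      rwa [ContinuousLinearMap.adjoint_comp, h3] at this
    have hTP : ContinuousLinearMap.adjoint T (projV f g) = ContinuousLinearMap.adjoint T g := by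
      rw [hP g]
      exact ContinuousLinearMap.ext_iff.mp e2 g
    have hPadj : projV f g = ContinuousLinearMap.adjoint Tdag (ContinuousLinearMap.adjoint T g) := by
      rw [hP g]
      have := congrArg ContinuousLinearMap.adjoint h3
      rw [ContinuousLinearMap.adjoint_comp] at h3
      exact (ContinuousLinearMap.ext_iff.mp h3 g).symm
    constructor
    · rcases eq_or_ne ‖Tdag‖ 0 with hz | hz
      · rw [hz, inv_zero, zero_mul]
        exact norm_nonneg _
      · have hbd : ‖projV f g‖ ≤ ‖Tdag‖ * ‖ContinuousLinearMap.adjoint T g‖ := by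
          rw [hPadj]
          calc ‖ContinuousLinearMap.adjoint Tdag (ContinuousLinearMap.adjoint T g)‖
              ≤ ‖ContinuousLinearMap.adjoint Tdag‖ * ‖ContinuousLinearMap.adjoint T g‖ :=
                ContinuousLinearMap.le_opNorm _ _
            _ = ‖Tdag‖ * ‖ContinuousLinearMap.adjoint T g‖ := by
                rw [LinearIsometryEquiv.norm_map ContinuousLinearMap.adjoint Tdag]
        rw [inv_mul_le_iff₀ (lt_of_le_of_ne (norm_nonneg _) (Ne.symm hz))]
        exact hbd
    · calc ‖ContinuousLinearMap.adjoint T g‖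
          = ‖ContinuousLinearMap.adjoint T (projV f g)‖ := by rw [hTP]
        _ ≤ ‖ContinuousLinearMap.adjoint T‖ * ‖projV f g‖ := ContinuousLinearMap.le_opNorm _ _
        _ = ‖T‖ * ‖projV f g‖ := by rw [hadjnorm]
  · intro c
    constructor
    · rcases eq_or_ne ‖Tdag‖ 0 with hz | hz
      · rw [hz, inv_zero, zero_mul]
        exact norm_nonneg _
      · have hbd : ‖projQ T c‖ ≤ ‖Tdag‖ * ‖T c‖ := by
          rw [hQ c]
          exact ContinuousLinearMap.le_opNorm _ _
        rw [inv_mul_le_iff₀ (lt_of_le_of_ne (norm_nonneg _) (Ne.symm hz))]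
        exact hbd
    · calc ‖T c‖ = ‖T (projQ T c)‖ := by rw [hQ c, h1' c]
        _ ≤ ‖T‖ * ‖projQ T c‖ := ContinuousLinearMap.le_opNorm _ _


end
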